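/- Phase-1 belief dynamics under common priors and a more patient principal: fix δ_A > 0 and μ_P ∈ (1/2, 1). The integrand I(x) = (v(1) - v(x) - (1-x)·v'(x)) / ((1-x)·v(x)) is positive and continuous on [1/2, μ_P], and, setting t* by δ_A·t* = ∫_{1/2}^{μ_P} I(x) dx, there is a unique continuous strictly decreasing function m : [0,t*] → [1/2, μ_P] such that δ_A·t = ∫_{m(t)}^{μ_P} I(x) dx for all t ∈ [0,t*]; moreover m(0) = μ_P, m(t*) = 1/2, m is differentiable on (0,t*), and -δ_A = (m'(t)/v(m(t)))·[(v(1) - v(m(t)))/(1 - m(t)) - v'(m(t))] for all t ∈ (0,t*). -/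

import Mathlib

open MeasureTheory Set Topology Filter

noncomputable section

/-- **Phase-1 belief dynamics under common priors and a more patient principal.**
For `μP ∈ (1/2,1)`, the integrand `I` is positive and continuous on `[1/2, μP]`, and the
integral equation `δA t = ∫_{m(t)}^{μP} I(x) dx` has a unique continuous strictly
decreasing solution `m : [0,t*] → [1/2,μP]`; it satisfies `m 0 = μP`, `m t* = 1/2`, is
differentiable on `(0,t*)` and solves the stated ODE there. -/
theorem phase1_belief_dynamics
    (v v' : ℝ → ℝ) (δA μP : ℝ)
    (hδA : 0 < δA) (hμP : μP ∈ Ioo (1/2 : ℝ) 1)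
    (hconv : StrictConvexOn ℝ (Icc (0:ℝ) 1) v)
    (hderiv : ∀ x ∈ Icc (0:ℝ) 1, HasDerivWithinAt v (v' x) (Icc (0:ℝ) 1) x)
    (hpos : ∀ x ∈ Icc (0:ℝ) 1, 0 < v x)
    (hsymm : ∀ x ∈ Icc (0:ℝ) 1, v x = v (1 - x)) :
    let I : ℝ → ℝ := fun x => (v 1 - v x - (1 - x) * v' x) / ((1 - x) * v x)
    let tstar : ℝ := (∫ x in (1/2 : ℝ)..μP, I x) / δA
    (∀ x ∈ Icc (1/2 : ℝ) μP, 0 < I x) ∧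
    ContinuousOn I (Icc (1/2 : ℝ) μP) ∧
    ∃ m : ℝ → ℝ,
      (ContinuousOn m (Icc (0:ℝ) tstar) ∧
       StrictAntiOn m (Icc (0:ℝ) tstar) ∧
       (∀ t ∈ Icc (0:ℝ) tstar, m t ∈ Icc (1/2 : ℝ) μP) ∧
       (∀ t ∈ Icc (0:ℝ) tstar, δA * t = ∫ x in (m t)..μP, I x)) ∧
      (∀ m₂ : ℝ → ℝ,
        (ContinuousOn m₂ (Icc (0:ℝ) tstar) ∧
         StrictAntiOn m₂ (Icc (0:ℝ) tstar) ∧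
         (∀ t ∈ Icc (0:ℝ) tstar, m₂ t ∈ Icc (1/2 : ℝ) μP) ∧
         (∀ t ∈ Icc (0:ℝ) tstar, δA * t = ∫ x in (m₂ t)..μP, I x)) →
        EqOn m₂ m (Icc (0:ℝ) tstar)) ∧
      m 0 = μP ∧ m tstar = 1/2 ∧
      (∀ t ∈ Ioo (0:ℝ) tstar, ∃ d : ℝ, HasDerivAt m d t ∧
        -δA = (d / v (m t)) * ((v 1 - v (m t)) / (1 - m t) - v' (m t))) := by
  obtain ⟨hμl, hμu⟩ := hμP
  intro I tstar
  have hsubIcc : Icc (1/2:ℝ) μP ⊆ Icc (0:ℝ) 1 :=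
    fun x hx => ⟨by linarith [hx.1], by linarith [hx.2]⟩
  have hsubIoo : Icc (1/2:ℝ) μP ⊆ Ioo (0:ℝ) 1 :=
    fun x hx => ⟨by linarith [hx.1], by linarith [hx.2]⟩
  have h1mem : (1:ℝ) ∈ Icc (0:ℝ) 1 := ⟨by norm_num, le_refl 1⟩
  -- tangent line inequality
  have htan : ∀ x ∈ Icc (1/2:ℝ) μP, v' x * (1 - x) < v 1 - v x := by
    intro x hx
    have hx1 : x < 1 := (hsubIoo hx).2
    have h := hconv.lt_slope_of_hasDerivWithinAt (hsubIcc hx) h1mem hx1 (hderiv x (hsubIcc hx))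
    rw [slope_def_field] at h
    have h1x : (0:ℝ) < 1 - x := by linarith
    rw [lt_div_iff₀ h1x] at h
    linarith
  have hnum : ∀ x ∈ Icc (1/2:ℝ) μP, 0 < v 1 - v x - (1 - x) * v' x := by
    intro x hx; have := htan x hx; nlinarith
  have hden : ∀ x ∈ Icc (1/2:ℝ) μP, 0 < (1 - x) * v x := by
    intro x hx
    exact mul_pos (by linarith [(hsubIoo hx).2] : (0:ℝ) < 1 - x) (hpos x (hsubIcc hx))
  have hIpos : ∀ x ∈ Icc (1/2:ℝ) μP, 0 < I x := fun x hx => div_pos (hnum x hx) (hden x hx)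
  -- strict monotonicity of v'
  have hmono : StrictMonoOn v' (Icc (0:ℝ) 1) := by
    intro x hx y hy hxy
    have h1 := hconv.lt_slope_of_hasDerivWithinAt hx hy hxy (hderiv x hx)
    have h2 := hconv.slope_lt_of_hasDerivWithinAt hx hy hxy (hderiv y hy)
    linarith
  have hOC : OrdConnected (v' '' Icc (0:ℝ) 1) :=
    (ordConnected_Icc).image_hasDerivWithinAt (fun x hx => hderiv x hx)
  have hv'cont : ContinuousOn v' (Icc (1/2:ℝ) μP) := by
    intro a ha
    have haI : a ∈ Ioo (0:ℝ) 1 := hsubIoo ha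
    refine ContinuousAt.continuousWithinAt ?_
    refine hmono.continuousAt_of_image_mem_nhds (Icc_mem_nhds haI.1 haI.2) ?_
    obtain ⟨a₁, ha₁⟩ := exists_between haI.1
    obtain ⟨a₂, ha₂⟩ := exists_between haI.2
    have ha₁m : a₁ ∈ Icc (0:ℝ) 1 := ⟨ha₁.1.le, by linarith [ha₁.2, haI.2]⟩
    have ha₂m : a₂ ∈ Icc (0:ℝ) 1 := ⟨by linarith [haI.1, ha₂.1], ha₂.2.le⟩
    have ham : a ∈ Icc (0:ℝ) 1 := ⟨haI.1.le, haI.2.le⟩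
    have h₁ : v' a₁ < v' a := hmono ha₁m ham ha₁.2
    have h₂ : v' a < v' a₂ := hmono ham ha₂m ha₂.1
    exact Filter.mem_of_superset (Ioo_mem_nhds h₁ h₂) (Ioo_subset_Icc_self.trans
      (hOC.out (mem_image_of_mem _ ha₁m) (mem_image_of_mem _ ha₂m)))
  have hvcont : ContinuousOn v (Icc (0:ℝ) 1) := fun x hx => (hderiv x hx).continuousWithinAt
  have hIcont : ContinuousOn I (Icc (1/2:ℝ) μP) := by
    apply ContinuousOn.div
    · exact (continuousOn_const.sub (hvcont.mono hsubIcc)).sub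
        (((continuous_const.sub continuous_id).continuousOn).mul hv'cont)
    · exact ((continuous_const.sub continuous_id).continuousOn).mul (hvcont.mono hsubIcc)
    · exact fun x hx => (hden x hx).ne'
  -- basic integral setup
  have hμPmem : μP ∈ Icc (1/2:ℝ) μP := ⟨hμl.le, le_refl _⟩
  have hhalfmem : (1/2:ℝ) ∈ Icc (1/2:ℝ) μP := ⟨le_refl _, hμl.le⟩
  have hint : ∀ a ∈ Icc (1/2:ℝ) μP, ∀ b ∈ Icc (1/2:ℝ) μP, IntervalIntegrable I volume a b :=
    fun a ha b hb => (hIcont.mono (uIcc_subset_Icc ha hb)).intervalIntegrable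
  set F : ℝ → ℝ := fun y => ∫ x in y..μP, I x with hFdef
  have hFeq : ∀ y, F y = ∫ x in y..μP, I x := fun y => rfl
  have hFμP : F μP = 0 := intervalIntegral.integral_same
  have hFanti : StrictAntiOn F (Icc (1/2:ℝ) μP) := by
    intro y₁ h₁ y₂ h₂ hlt
    have hadd := intervalIntegral.integral_add_adjacent_intervals
      (hint y₁ h₁ y₂ h₂) (hint y₂ h₂ μP hμPmem)
    have hposint : 0 < ∫ x in y₁..y₂, I x :=
      intervalIntegral.intervalIntegral_pos_of_pos_on (hint y₁ h₁ y₂ h₂)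
        (fun x hx => hIpos x ⟨h₁.1.trans hx.1.le, hx.2.le.trans h₂.2⟩) hlt
    rw [hFeq y₁, hFeq y₂, ← hadd]
    linarith
  have hFcont : ContinuousOn F (Icc (1/2:ℝ) μP) := by
    have hi : IntegrableOn I (uIcc (1/2:ℝ) μP) volume := by
      rw [uIcc_of_le hμl.le]; exact hIcont.integrableOn_Icc
    have := intervalIntegral.continuousOn_primitive_interval_left hi
    rwa [uIcc_of_le hμl.le] at this
  set C : ℝ := ∫ x in (1/2:ℝ)..μP, I x with hCdef
  have hC : 0 < C :=
    intervalIntegral.intervalIntegral_pos_of_pos_on (hint _ hhalfmem _ hμPmem)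
      (fun x hx => hIpos x ⟨hx.1.le, hx.2.le⟩) hμl
  have htstar : δA * tstar = C := by
    show δA * (C / δA) = C
    field_simp
  have hts_pos : 0 < tstar := div_pos hC hδA
  have hFhalf : F (1/2) = C := rfl
  have hFmem : ∀ y ∈ Icc (1/2:ℝ) μP, F y ∈ Icc (0:ℝ) C := by
    intro y hy
    constructor
    · rw [← hFμP]; exact hFanti.antitoneOn hy hμPmem hy.2
    · rw [← hFhalf]; exact hFanti.antitoneOn hhalfmem hy hy.1
  have hsurj : Icc (0:ℝ) C ⊆ F '' (Icc (1/2:ℝ) μP) := by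
    have := intermediate_value_Icc' hμl.le hFcont
    rwa [hFμP, hFhalf] at this
  -- construct the inverse via a homeomorphism
  haveI : CompactSpace (Icc (1/2:ℝ) μP) := by infer_instance
  let e : Icc (1/2:ℝ) μP ≃ Icc (0:ℝ) C := Equiv.ofBijective
    (fun y => ⟨F y, hFmem y y.2⟩)
    ⟨fun y₁ y₂ hh => Subtype.ext (hFanti.injOn y₁.2 y₂.2 (congrArg Subtype.val hh)),
     fun z => by
      obtain ⟨y, hy, hFy⟩ := hsurj z.2
      exact ⟨⟨y, hy⟩, Subtype.ext hFy⟩⟩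
  have hecont : Continuous e := Continuous.subtype_mk (hFcont.restrict) _
  let homeo : Icc (1/2:ℝ) μP ≃ₜ Icc (0:ℝ) C := Continuous.homeoOfEquivCompactToT2 (f := e) hecont
  set m : ℝ → ℝ := fun t => ((homeo.symm (projIcc 0 C hC.le (δA * t))) : ℝ) with hmdef
  have hmcont : Continuous m := by
    apply continuous_subtype_val.comp
    exact homeo.symm.continuous.comp (continuous_projIcc.comp (continuous_const.mul continuous_id))
  have hmK : ∀ t, m t ∈ Icc (1/2:ℝ) μP := fun t => (homeo.symm _).2
  have hFm : ∀ t ∈ Icc (0:ℝ) tstar, F (m t) = δA * t := by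
    intro t ht
    have hmem : δA * t ∈ Icc (0:ℝ) C := by
      constructor
      · exact mul_nonneg hδA.le ht.1
      · calc δA * t ≤ δA * tstar := by nlinarith [ht.2]
          _ = C := htstar
    have hproj : projIcc 0 C hC.le (δA * t) = ⟨δA * t, hmem⟩ := projIcc_of_mem hC.le hmem
    have happ := congrArg Subtype.val (homeo.apply_symm_apply (projIcc 0 C hC.le (δA * t)))
    have h2 : F (m t) = ((projIcc 0 C hC.le (δA * t) : Icc (0:ℝ) C) : ℝ) := happ
    rw [hproj] at h2
    exact h2
  have hmanti : StrictAntiOn m (Icc (0:ℝ) tstar) := by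
    intro t₁ h₁ t₂ h₂ hlt
    have hne : F (m t₁) < F (m t₂) := by
      rw [hFm t₁ h₁, hFm t₂ h₂]
      exact (mul_lt_mul_iff_right₀ hδA).mpr hlt
    by_contra hcon
    push_neg at hcon
    have := hFanti.antitoneOn (hmK t₁) (hmK t₂) hcon
    linarith
  have hts_mem : tstar ∈ Icc (0:ℝ) tstar := ⟨hts_pos.le, le_refl _⟩
  have h0_mem : (0:ℝ) ∈ Icc (0:ℝ) tstar := ⟨le_refl _, hts_pos.le⟩
  have hm0 : m 0 = μP := by
    refine hFanti.injOn (hmK 0) hμPmem ?_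
    rw [hFm 0 h0_mem, hFμP, mul_zero]
  have hmtstar : m tstar = 1/2 := by
    refine hFanti.injOn (hmK tstar) hhalfmem ?_
    rw [hFm tstar hts_mem, hFhalf, htstar]
  refine ⟨hIpos, hIcont, m,
    ⟨hmcont.continuousOn, hmanti, fun t _ => hmK t, fun t ht => (hFm t ht).symm⟩,
    ?_, hm0, hmtstar, ?_⟩
  · -- uniqueness
    rintro m₂ ⟨-, -, hm₂K, hm₂eq⟩ t ht
    refine hFanti.injOn (hm₂K t ht) (hmK t) ?_
    rw [hFm t ht, hFeq (m₂ t), ← hm₂eq t ht]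
  · -- derivative
    intro t ht
    have htmem : t ∈ Icc (0:ℝ) tstar := ⟨ht.1.le, ht.2.le⟩
    have hmt1 : m t < μP := by rw [← hm0]; exact hmanti h0_mem htmem ht.1
    have hmt2 : 1/2 < m t := by rw [← hmtstar]; exact hmanti htmem hts_mem ht.2
    set w := m t with hw
    have hwK : w ∈ Icc (1/2:ℝ) μP := hmK t
    have hIw : 0 < I w := hIpos w hwK
    have hIcontAt : ContinuousAt I w := hIcont.continuousAt (Icc_mem_nhds hmt2 hmt1)
    have hmeas : StronglyMeasurableAtFilter I (𝓝 w) volume :=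
      (hIcont.mono Ioo_subset_Icc_self).stronglyMeasurableAtFilter isOpen_Ioo w ⟨hmt2, hmt1⟩
    have hint' : IntervalIntegrable I volume μP w := hint μP hμPmem w hwK
    have hG : HasDerivAt (fun u => ∫ x in μP..u, I x) (I w) w :=
      intervalIntegral.integral_hasDerivAt_right hint' hmeas hIcontAt
    have hFderiv : HasDerivAt F (-(I w)) w := by
      have hneg := hG.neg
      have heq : (fun u => -∫ x in μP..u, I x) = F := by
        funext u; rw [hFeq u, ← intervalIntegral.integral_symm]
      rw [← heq]; exact hneg
    have hf' : HasDerivAt (fun y => F y / δA) (-(I w)/δA) w := hFderiv.div_const δA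
    have hfne : -(I w)/δA ≠ 0 :=
      ne_of_lt (div_neg_of_neg_of_pos (neg_lt_zero.mpr hIw) hδA)
    have hfg : ∀ᶠ s in 𝓝 t, F (m s) / δA = s := by
      filter_upwards [Ioo_mem_nhds ht.1 ht.2] with s hs
      rw [hFm s ⟨hs.1.le, hs.2.le⟩]
      field_simp
    have hm' : HasDerivAt m (-(I w)/δA)⁻¹ t :=
      HasDerivAt.of_local_left_inverse hmcont.continuousAt hf' hfne hfg
    refine ⟨(-(I w)/δA)⁻¹, hm', ?_⟩
    have hc : (0:ℝ) < 1 - w := by linarith [hwK.2]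
    have hvw : 0 < v w := hpos w (hsubIcc hwK)
    have hNw : 0 < v 1 - v w - (1 - w) * v' w := hnum w hwK
    have hIw_def : I w = (v 1 - v w - (1 - w) * v' w) / ((1 - w) * v w) := rfl
    have hIvw : (v 1 - v w) / (1 - w) - v' w = I w * v w := by
      rw [hIw_def]
      field_simp
    have hfin : ((-I w / δA)⁻¹ / v w) * (I w * v w) = -δA := by
      rw [inv_div]
      field_simp
    rw [hIvw]
    exact hfin.symm
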